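/- arXiv:2605.30886 — 4 statements merged into one kernel-verified Lean document; each statement's English description precedes it below -/
import Mathlib

section
/- Let A be a d×d real matrix, B a d×m real matrix, and Σ an m×m symmetric positive semidefinite matrix. Define Ψ(δ) = ∫₀^δ exp((δ − s)A) B ds and K(δ) = ∫₀^δ exp((δ − s)A) B Σ Bᵀ exp((δ − s)Aᵀ) ds. Then there exists a constant C > 0, depending only on A, B, Σ, such that for all δ ∈ (0, 1]: ‖Ψ(δ) Σ Ψ(δ)ᵀ − δ·K(δ)‖ ≤ C δ⁴, where ‖·‖ is the operator norm. In particular, the second- and third-order Taylor terms of the two covariances cancel exactly. -/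
open MeasureTheory Matrix
open scoped Matrix.Norms.L2Operator

noncomputable def sdgMulRightCLM {d m k : ℕ} (N : Matrix (Fin m) (Fin k) ℝ) :
    Matrix (Fin d) (Fin m) ℝ →L[ℝ] Matrix (Fin d) (Fin k) ℝ :=
  LinearMap.toContinuousLinearMap
    { toFun := fun X => X * N
      map_add' := fun X Y => Matrix.add_mul X Y N
      map_smul' := fun r X => Matrix.smul_mul r X N }

noncomputable def sdgTransposeCLM (d m : ℕ) :
    Matrix (Fin d) (Fin m) ℝ →L[ℝ] Matrix (Fin m) (Fin d) ℝ :=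
  LinearMap.toContinuousLinearMap
    { toFun := fun X => Xᵀ
      map_add' := fun X Y => Matrix.transpose_add X Y
      map_smul' := fun r X => Matrix.transpose_smul r X }

lemma sdg_cov_identity {d m : ℕ} (S : Matrix (Fin m) (Fin m) ℝ) (δ : ℝ)
    (f : ℝ → Matrix (Fin d) (Fin m) ℝ) (hf : Continuous f)
    (c : Matrix (Fin d) (Fin m) ℝ) (hc : (∫ s in (0:ℝ)..δ, f s) = δ • c) :
    δ • ∫ s in (0:ℝ)..δ, (f s - c) * S * (f s - c)ᵀ
      = δ • (∫ s in (0:ℝ)..δ, f s * S * (f s)ᵀ)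
        - (∫ s in (0:ℝ)..δ, f s) * S * (∫ s in (0:ℝ)..δ, f s)ᵀ := by
  have hfc : Continuous fun s => f s * S * (f s)ᵀ :=
    ((hf.matrix_mul continuous_const).matrix_mul (hf.matrix_transpose))
  have h1 : ∀ s : ℝ, (f s - c) * S * (f s - c)ᵀ
      = f s * S * (f s)ᵀ - f s * (S * cᵀ) - (f s * (Sᵀ * cᵀ))ᵀ + c * S * cᵀ := by
    intro s
    have h2 : (f s * (Sᵀ * cᵀ))ᵀ = c * S * (f s)ᵀ := by
      simp [Matrix.transpose_mul, Matrix.mul_assoc]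
    rw [h2]
    simp only [Matrix.transpose_sub, Matrix.sub_mul, Matrix.mul_sub, Matrix.mul_assoc]
    abel
  have hI1 : IntervalIntegrable (fun s => f s * S * (f s)ᵀ) volume 0 δ :=
    hfc.intervalIntegrable _ _
  have hI2 : IntervalIntegrable (fun s => f s * (S * cᵀ)) volume 0 δ :=
    (hf.matrix_mul continuous_const).intervalIntegrable _ _
  have hI3 : IntervalIntegrable (fun s => (f s * (Sᵀ * cᵀ))ᵀ) volume 0 δ :=
    ((hf.matrix_mul continuous_const).matrix_transpose).intervalIntegrable _ _
  have hI4 : IntervalIntegrable (fun _ : ℝ => c * S * cᵀ) volume 0 δ :=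
    intervalIntegrable_const
  have e2 : (∫ s in (0:ℝ)..δ, f s * (S * cᵀ)) = δ • (c * (S * cᵀ)) := by
    rw [show (fun s => f s * (S * cᵀ)) = fun s => sdgMulRightCLM (S * cᵀ) (f s) from rfl,
      ContinuousLinearMap.intervalIntegral_comp_comm _ (hf.intervalIntegrable _ _), hc]
    simp [sdgMulRightCLM, Matrix.smul_mul]
  have e2' : (∫ s in (0:ℝ)..δ, f s * (Sᵀ * cᵀ)) = δ • (c * (Sᵀ * cᵀ)) := by
    rw [show (fun s => f s * (Sᵀ * cᵀ)) = fun s => sdgMulRightCLM (Sᵀ * cᵀ) (f s) from rfl,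
      ContinuousLinearMap.intervalIntegral_comp_comm _ (hf.intervalIntegrable _ _), hc]
    simp [sdgMulRightCLM, Matrix.smul_mul]
  have e3 : (∫ s in (0:ℝ)..δ, (f s * (Sᵀ * cᵀ))ᵀ) = δ • (c * S * cᵀ) := by
    rw [show (fun s => (f s * (Sᵀ * cᵀ))ᵀ)
        = fun s => sdgTransposeCLM d d (f s * (Sᵀ * cᵀ)) from rfl,
      ContinuousLinearMap.intervalIntegral_comp_comm _
        ((hf.matrix_mul continuous_const).intervalIntegrable _ _), e2']
    simp [sdgTransposeCLM, Matrix.transpose_mul, Matrix.mul_assoc]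
  have e4 : (∫ _ : ℝ in (0:ℝ)..δ, c * S * cᵀ) = δ • (c * S * cᵀ) := by
    simp
  calc δ • ∫ s in (0:ℝ)..δ, (f s - c) * S * (f s - c)ᵀ
      = δ • ∫ s in (0:ℝ)..δ,
          (f s * S * (f s)ᵀ - f s * (S * cᵀ) - (f s * (Sᵀ * cᵀ))ᵀ + c * S * cᵀ) := by
        simp only [h1]
    _ = δ • ((∫ s in (0:ℝ)..δ, f s * S * (f s)ᵀ) - δ • (c * (S * cᵀ))
          - δ • (c * S * cᵀ) + δ • (c * S * cᵀ)) := by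
        rw [intervalIntegral.integral_add ((hI1.sub hI2).sub hI3) hI4,
          intervalIntegral.integral_sub (hI1.sub hI2) hI3,
          intervalIntegral.integral_sub hI1 hI2, e2, e3, e4]
    _ = δ • (∫ s in (0:ℝ)..δ, f s * S * (f s)ᵀ)
        - (∫ s in (0:ℝ)..δ, f s) * S * (∫ s in (0:ℝ)..δ, f s)ᵀ := by
        rw [hc]
        simp only [smul_sub, smul_add, smul_smul, Matrix.smul_mul, Matrix.mul_smul,
          Matrix.transpose_smul, Matrix.mul_assoc]
        abel

lemma sdg_exp_lip (d : ℕ) (A : Matrix (Fin d) (Fin d) ℝ) :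
    ∃ C : ℝ, 0 ≤ C ∧ ∀ u ∈ Set.Icc (0:ℝ) 1, ∀ v ∈ Set.Icc (0:ℝ) 1,
      ‖NormedSpace.exp (u • A) - NormedSpace.exp (v • A)‖ ≤ C * ‖u - v‖ := by
  have hcont : Continuous fun u : ℝ => A * NormedSpace.exp (u • A) :=
    continuous_const.mul ((continuous_iff_continuousAt.2 fun x => (NormedSpace.exp_analytic (𝕂 := ℝ) x).continuousAt).comp (continuous_id.smul continuous_const))
  obtain ⟨C₀, hC₀⟩ := (isCompact_Icc (a := (0:ℝ)) (b := 1)).exists_bound_of_continuousOn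
    hcont.continuousOn
  have hC₀' : ∀ x ∈ Set.Icc (0:ℝ) 1, ‖A * NormedSpace.exp (x • A)‖ ≤ max C₀ 0 :=
    fun x hx => le_trans (hC₀ x hx) (le_max_left _ _)
  exact ⟨max C₀ 0, le_max_right _ _, fun u hu v hv =>
    Convex.norm_image_sub_le_of_norm_hasDerivWithin_le
      (f' := fun x => A * NormedSpace.exp (x • A))
      (fun x _ => (hasDerivAt_exp_smul_const' A x).hasDerivWithinAt) hC₀'
      (convex_Icc 0 1) hv hu⟩

/-- Fourth-order covariance matching: with
`Ψ(δ) = ∫₀^δ exp((δ−s)A) B ds` and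
`K(δ) = ∫₀^δ exp((δ−s)A) B Σ Bᵀ exp((δ−s)Aᵀ) ds`, there is `C > 0` (depending only on
`A, B, Σ`) such that `‖Ψ(δ) Σ Ψ(δ)ᵀ − δ·K(δ)‖ ≤ C δ⁴` for all `δ ∈ (0, 1]`, in the
operator norm (the second- and third-order Taylor terms cancel exactly). -/
theorem exact_vs_surrogate_covariance_match (d m : ℕ) (A : Matrix (Fin d) (Fin d) ℝ)
    (B : Matrix (Fin d) (Fin m) ℝ) (S : Matrix (Fin m) (Fin m) ℝ) (hS : S.PosSemidef) :
    ∃ C : ℝ, 0 < C ∧ ∀ δ : ℝ, 0 < δ → δ ≤ 1 →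
      ‖(∫ s in (0 : ℝ)..δ, NormedSpace.exp ((δ - s) • A) * B) * S
            * (∫ s in (0 : ℝ)..δ, NormedSpace.exp ((δ - s) • A) * B)ᵀ
          - δ • (∫ s in (0 : ℝ)..δ,
              NormedSpace.exp ((δ - s) • A) * B * S * Bᵀ
                * NormedSpace.exp ((δ - s) • Aᵀ))‖ ≤ C * δ ^ 4 := by
  obtain ⟨C₀, hC₀0, hLip⟩ := sdg_exp_lip d A
  set L : ℝ := C₀ * ‖B‖ + 1 with hLdef
  have hL0 : 0 < L := by positivity
  have hS0 : (0:ℝ) ≤ ‖S‖ := norm_nonneg _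
  refine ⟨4 * L ^ 2 * (‖S‖ + 1), by positivity, fun δ hδ hδ1 => ?_⟩
  set f : ℝ → Matrix (Fin d) (Fin m) ℝ :=
    fun s => NormedSpace.exp ((δ - s) • A) * B with hfdef
  have hfcont : Continuous f :=
    (((continuous_iff_continuousAt.2 fun x => (NormedSpace.exp_analytic (𝕂 := ℝ) x).continuousAt).comp
      ((continuous_const.sub continuous_id).smul continuous_const)).matrix_mul continuous_const)
  have hKint : ∀ s : ℝ,
      NormedSpace.exp ((δ - s) • A) * B * S * Bᵀ * NormedSpace.exp ((δ - s) • Aᵀ)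
      = f s * S * (f s)ᵀ := by
    intro s
    have ht : NormedSpace.exp ((δ - s) • Aᵀ) = (NormedSpace.exp ((δ - s) • A))ᵀ := by
      rw [← Matrix.transpose_smul, Matrix.exp_transpose]
    rw [ht, hfdef]
    simp [Matrix.transpose_mul, Matrix.mul_assoc]
  set c : Matrix (Fin d) (Fin m) ℝ := δ⁻¹ • ∫ s in (0:ℝ)..δ, f s with hcdef
  have hc : (∫ s in (0:ℝ)..δ, f s) = δ • c := by
    rw [hcdef, smul_smul, mul_inv_cancel₀ hδ.ne', one_smul]
  have hid := sdg_cov_identity S δ f hfcont c hc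
  -- pointwise bound on ‖f s - B‖
  have hfB : ∀ s ∈ Set.Icc (0:ℝ) δ, ‖f s - B‖ ≤ L * δ := by
    intro s hs
    have hmem : δ - s ∈ Set.Icc (0:ℝ) 1 := ⟨by linarith [hs.2], by linarith [hs.1]⟩
    have h0 : (0:ℝ) ∈ Set.Icc (0:ℝ) 1 := ⟨le_refl _, zero_le_one⟩
    have hB : f s - B = (NormedSpace.exp ((δ - s) • A) - NormedSpace.exp ((0:ℝ) • A)) * B := by
      rw [hfdef, Matrix.sub_mul]
      simp [NormedSpace.exp_zero]
    rw [hB]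
    calc ‖(NormedSpace.exp ((δ - s) • A) - NormedSpace.exp ((0:ℝ) • A)) * B‖
        ≤ ‖NormedSpace.exp ((δ - s) • A) - NormedSpace.exp ((0:ℝ) • A)‖ * ‖B‖ :=
          Matrix.l2_opNorm_mul _ _
      _ ≤ (C₀ * ‖(δ - s) - 0‖) * ‖B‖ := by
          exact mul_le_mul_of_nonneg_right (hLip _ hmem 0 h0) (norm_nonneg B)
      _ ≤ L * δ := by
          rw [sub_zero, Real.norm_eq_abs, abs_of_nonneg (by linarith [hs.2] : (0:ℝ) ≤ δ - s)]
          have h1 : C₀ * (δ - s) * ‖B‖ ≤ C₀ * δ * ‖B‖ := by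
            nlinarith [mul_nonneg (mul_nonneg hC₀0 hs.1) (norm_nonneg B)]
          nlinarith [hδ.le, norm_nonneg B]
  have hΨB : ‖(∫ s in (0:ℝ)..δ, f s) - δ • B‖ ≤ L * δ * δ := by
    have hsub : (∫ s in (0:ℝ)..δ, f s) - δ • B = ∫ s in (0:ℝ)..δ, (f s - B) := by
      rw [intervalIntegral.integral_sub (hfcont.intervalIntegrable _ _) intervalIntegrable_const,
        intervalIntegral.integral_const, sub_zero]
    rw [hsub]
    have := intervalIntegral.norm_integral_le_of_norm_le_const
      (f := fun s => f s - B) (a := 0) (b := δ) (C := L * δ) ?_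
    · rw [sub_zero, abs_of_pos hδ] at this
      exact this
    · intro x hx
      rw [Set.uIoc_of_le hδ.le] at hx
      exact hfB x ⟨hx.1.le, hx.2⟩
  have hgb : ∀ s ∈ Set.Icc (0:ℝ) δ, ‖f s - c‖ ≤ 2 * L * δ := by
    intro s hs
    have hBc : ‖B - c‖ ≤ L * δ := by
      have h1 : B - c = δ⁻¹ • (δ • B - ∫ s in (0:ℝ)..δ, f s) := by
        rw [smul_sub, smul_smul, inv_mul_cancel₀ hδ.ne', one_smul, hcdef]
      rw [h1, norm_smul, Real.norm_eq_abs, abs_of_pos (inv_pos.mpr hδ), norm_sub_rev]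
      calc δ⁻¹ * ‖(∫ s in (0:ℝ)..δ, f s) - δ • B‖ ≤ δ⁻¹ * (L * δ * δ) :=
            mul_le_mul_of_nonneg_left hΨB (inv_pos.mpr hδ).le
        _ = L * δ := by field_simp
    calc ‖f s - c‖ = ‖(f s - B) + (B - c)‖ := by abel_nf
      _ ≤ ‖f s - B‖ + ‖B - c‖ := norm_add_le _ _
      _ ≤ L * δ + L * δ := add_le_add (hfB s hs) hBc
      _ = 2 * L * δ := by ring
  -- bound the integrand of the g-integral
  have hgint : ∀ x ∈ Set.uIoc (0:ℝ) δ,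
      ‖(f x - c) * S * (f x - c)ᵀ‖ ≤ 2 * L * δ * ‖S‖ * (2 * L * δ) := by
    intro x hx
    rw [Set.uIoc_of_le hδ.le] at hx
    have hxI : x ∈ Set.Icc (0:ℝ) δ := ⟨hx.1.le, hx.2⟩
    have hT : ‖(f x - c)ᵀ‖ = ‖f x - c‖ := by
      rw [← Matrix.conjTranspose_eq_transpose_of_trivial]
      exact Matrix.l2_opNorm_conjTranspose _
    calc ‖(f x - c) * S * (f x - c)ᵀ‖
        ≤ ‖(f x - c) * S‖ * ‖(f x - c)ᵀ‖ := Matrix.l2_opNorm_mul _ _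
      _ ≤ ‖f x - c‖ * ‖S‖ * ‖(f x - c)ᵀ‖ := by
          exact mul_le_mul_of_nonneg_right (Matrix.l2_opNorm_mul _ _) (norm_nonneg _)
      _ = ‖f x - c‖ * ‖S‖ * ‖f x - c‖ := by rw [hT]
      _ ≤ 2 * L * δ * ‖S‖ * (2 * L * δ) := by
          have h1 := hgb x hxI
          have h2 : (0:ℝ) ≤ ‖f x - c‖ := norm_nonneg _
          have h3 : ‖f x - c‖ * ‖f x - c‖ ≤ (2 * L * δ) * (2 * L * δ) :=
            mul_le_mul h1 h1 h2 (by positivity)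
          nlinarith [mul_le_mul_of_nonneg_left h3 hS0]
  have hnorm : ‖∫ s in (0:ℝ)..δ, (f s - c) * S * (f s - c)ᵀ‖
      ≤ 2 * L * δ * ‖S‖ * (2 * L * δ) * δ := by
    have := intervalIntegral.norm_integral_le_of_norm_le_const
      (f := fun s => (f s - c) * S * (f s - c)ᵀ) (a := 0) (b := δ)
      (C := 2 * L * δ * ‖S‖ * (2 * L * δ)) hgint
    rwa [sub_zero, abs_of_pos hδ] at this
  -- rewrite the goal
  simp only [hKint]
  have hrew : (∫ s in (0:ℝ)..δ, f s) * S * (∫ s in (0:ℝ)..δ, f s)ᵀ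
      - δ • (∫ s in (0:ℝ)..δ, f s * S * (f s)ᵀ)
      = -(δ • ∫ s in (0:ℝ)..δ, (f s - c) * S * (f s - c)ᵀ) := by
    rw [hid]; abel
  rw [hrew, norm_neg, norm_smul, Real.norm_eq_abs, abs_of_pos hδ]
  calc δ * ‖∫ s in (0:ℝ)..δ, (f s - c) * S * (f s - c)ᵀ‖
      ≤ δ * (2 * L * δ * ‖S‖ * (2 * L * δ) * δ) :=
        mul_le_mul_of_nonneg_left hnorm hδ.le
    _ = 4 * L ^ 2 * ‖S‖ * δ ^ 4 := by ring
    _ ≤ 4 * L ^ 2 * (‖S‖ + 1) * δ ^ 4 := by nlinarith [pow_pos hδ 4]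
end

section
/- Let A be a d×d real matrix, B a d×m real matrix, Σ an m×m symmetric positive semidefinite matrix, and Q a d×d symmetric positive definite matrix. With Ψ(t) = ∫₀^t exp((t − s)A) B ds and K(t) = ∫₀^t exp((t − s)A) B Σ Bᵀ exp((t − s)Aᵀ) ds, there exists a constant C > 0, depending only on A, B, Σ, Q, such that for all δ ∈ (0, 1]: | ∫₀^δ tr( Q · ( Ψ(t) Σ Ψ(t)ᵀ − t·K(t) ) ) dt | ≤ C δ⁵. -/
open MeasureTheory Matrix
open scoped Matrix.Norms.L2Operator

section helpers
variable {d' m' k' : ℕ}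

theorem intInt_transpose {a b : ℝ} {f : ℝ → Matrix (Fin d') (Fin m') ℝ}
    (hf : Continuous f) :
    (∫ x in a..b, f x)ᵀ = ∫ x in a..b, (f x)ᵀ := by
  let L : Matrix (Fin d') (Fin m') ℝ →L[ℝ] Matrix (Fin m') (Fin d') ℝ :=
    LinearMap.toContinuousLinearMap ((Matrix.transposeLinearEquiv (Fin d') (Fin m') ℝ ℝ).toLinearMap)
  exact (ContinuousLinearMap.intervalIntegral_comp_comm L (hf.intervalIntegrable a b)).symm

theorem intInt_mul_const {a b : ℝ} {f : ℝ → Matrix (Fin d') (Fin m') ℝ}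
    (hf : Continuous f) (C : Matrix (Fin m') (Fin k') ℝ) :
    (∫ x in a..b, f x) * C = ∫ x in a..b, f x * C := by
  let L : Matrix (Fin d') (Fin m') ℝ →L[ℝ] Matrix (Fin d') (Fin k') ℝ :=
    LinearMap.toContinuousLinearMap
      { toFun := fun X => X * C, map_add' := fun X Y => Matrix.add_mul X Y C,
        map_smul' := fun r X => Matrix.smul_mul r X C }
  exact (ContinuousLinearMap.intervalIntegral_comp_comm L (hf.intervalIntegrable a b)).symm

theorem intInt_const_mul {a b : ℝ} {f : ℝ → Matrix (Fin m') (Fin k') ℝ}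
    (hf : Continuous f) (C : Matrix (Fin d') (Fin m') ℝ) :
    C * (∫ x in a..b, f x) = ∫ x in a..b, C * f x := by
  let L : Matrix (Fin m') (Fin k') ℝ →L[ℝ] Matrix (Fin d') (Fin k') ℝ :=
    LinearMap.toContinuousLinearMap
      { toFun := fun X => C * X, map_add' := fun X Y => Matrix.mul_add C X Y,
        map_smul' := fun r X => Matrix.mul_smul C r X }
  exact (ContinuousLinearMap.intervalIntegral_comp_comm L (hf.intervalIntegrable a b)).symm

theorem norm_transpose_l2 (X : Matrix (Fin d') (Fin m') ℝ) : ‖Xᵀ‖ = ‖X‖ := by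
  rw [← Matrix.conjTranspose_eq_transpose_of_trivial]
  exact Matrix.l2_opNorm_conjTranspose X

end helpers

/-- Fifth-order accumulated-cost matching: with
`Ψ(t) = ∫₀^t exp((t−s)A) B ds` and `K(t) = ∫₀^t exp((t−s)A) B Σ Bᵀ exp((t−s)Aᵀ) ds`,
and `Q` symmetric positive definite, there is `C > 0` (depending only on `A, B, Σ, Q`)
with `|∫₀^δ tr(Q (Ψ(t) Σ Ψ(t)ᵀ − t·K(t))) dt| ≤ C δ⁵` for all `δ ∈ (0, 1]`. -/
theorem accumulated_cost_match (d m : ℕ) (A : Matrix (Fin d) (Fin d) ℝ)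
    (B : Matrix (Fin d) (Fin m) ℝ) (S : Matrix (Fin m) (Fin m) ℝ) (hS : S.PosSemidef)
    (Q : Matrix (Fin d) (Fin d) ℝ) (hQ : Q.PosDef) :
    ∃ C : ℝ, 0 < C ∧ ∀ δ : ℝ, 0 < δ → δ ≤ 1 →
      |∫ t in (0 : ℝ)..δ,
          Matrix.trace (Q *
            ((∫ s in (0 : ℝ)..t, NormedSpace.exp ((t - s) • A) * B) * S
                * (∫ s in (0 : ℝ)..t, NormedSpace.exp ((t - s) • A) * B)ᵀ
              - t • (∫ s in (0 : ℝ)..t,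
                  NormedSpace.exp ((t - s) • A) * B * S * Bᵀ
                    * NormedSpace.exp ((t - s) • Aᵀ))))| ≤ C * δ ^ 5 := by
  classical
  set Ltr : Matrix (Fin d) (Fin d) ℝ →L[ℝ] ℝ :=
    LinearMap.toContinuousLinearMap (Matrix.traceLinearMap (Fin d) ℝ ℝ) with hLtr
  have htrace_bound : ∀ X : Matrix (Fin d) (Fin d) ℝ, |Matrix.trace X| ≤ ‖Ltr‖ * ‖X‖ := by
    intro X
    have h1 : Matrix.trace X = Ltr X := rfl
    rw [h1, ← Real.norm_eq_abs]
    exact Ltr.le_opNorm X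
  have hSt : Sᵀ = S := by
    have := hS.1
    rwa [Matrix.IsHermitian, Matrix.conjTranspose_eq_transpose_of_trivial] at this
  set G : ℝ → Matrix (Fin d) (Fin m) ℝ := fun s => NormedSpace.exp (s • A) * B with hGdef
  have hEc : Continuous fun s : ℝ => NormedSpace.exp (s • A) :=
    (continuous_iff_continuousAt.2 fun x => (NormedSpace.exp_analytic (𝕂 := ℝ) x).continuousAt).comp
      (continuous_id.smul continuous_const)
  have hGc : Continuous G := hEc.matrix_mul continuous_const
  have hGTc : Continuous fun s => (G s)ᵀ := hGc.matrix_transpose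
  have hderiv : ∀ s : ℝ, HasDerivAt G (NormedSpace.exp (s • A) * A * B) s := by
    intro s
    let R : Matrix (Fin d) (Fin d) ℝ →L[ℝ] Matrix (Fin d) (Fin m) ℝ :=
      LinearMap.toContinuousLinearMap
        { toFun := fun X => X * B, map_add' := fun X Y => Matrix.add_mul X Y B,
          map_smul' := fun r X => Matrix.smul_mul r X B }
    exact R.hasFDerivAt.comp_hasDerivAt s (hasDerivAt_exp_smul_const A s)
  obtain ⟨L0, hL0⟩ := (isCompact_Icc (a := (0:ℝ)) (b := 1)).exists_bound_of_continuousOn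
    (((hEc.matrix_mul continuous_const).matrix_mul continuous_const
      (B := fun _ : ℝ => B)).continuousOn)
  set L : ℝ := max L0 0 with hLdef
  have hLnn : 0 ≤ L := le_max_right _ _
  have hLip : ∀ s ∈ Set.Icc (0:ℝ) 1, ∀ u ∈ Set.Icc (0:ℝ) 1, ‖G s - G u‖ ≤ L * |s - u| := by
    intro s hs u hu
    have := (convex_Icc (0:ℝ) 1).norm_image_sub_le_of_norm_hasDerivWithin_le
      (f := G) (f' := fun x => NormedSpace.exp (x • A) * A * B) (C := L)
      (fun x hx => (hderiv x).hasDerivWithinAt)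
      (fun x hx => le_trans (hL0 x hx) (le_max_left L0 0)) hu hs
    simpa [Real.norm_eq_abs] using this
  set K0 : ℝ := ‖Ltr‖ * ‖Q‖ * (‖S‖ * L ^ 2) with hK0def
  have hK0nn : 0 ≤ K0 := by positivity
  refine ⟨K0 + 1, by linarith, ?_⟩
  intro δ hδ hδ1
  rw [← Real.norm_eq_abs]
  have key : ∀ t ∈ Set.uIoc (0:ℝ) δ,
      ‖Matrix.trace (Q *
            ((∫ s in (0 : ℝ)..t, NormedSpace.exp ((t - s) • A) * B) * S
                * (∫ s in (0 : ℝ)..t, NormedSpace.exp ((t - s) • A) * B)ᵀ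
              - t • (∫ s in (0 : ℝ)..t,
                  NormedSpace.exp ((t - s) • A) * B * S * Bᵀ
                    * NormedSpace.exp ((t - s) • Aᵀ))))‖ ≤ (K0 + 1) * δ ^ 4 := by
    intro t ht
    rw [Set.uIoc_of_le hδ.le] at ht
    obtain ⟨ht0, htδ⟩ := ht
    have ht1 : t ≤ 1 := le_trans htδ hδ1
    -- rewrite the two integrals
    have hΨ : (∫ s in (0:ℝ)..t, NormedSpace.exp ((t - s) • A) * B) = ∫ s in (0:ℝ)..t, G s := by
      have h := intervalIntegral.integral_comp_sub_left (a := (0:ℝ)) (b := t)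
        (f := fun s => NormedSpace.exp (s • A) * B) t
      simpa [hGdef] using h
    have hK : (∫ s in (0:ℝ)..t, NormedSpace.exp ((t - s) • A) * B * S * Bᵀ
          * NormedSpace.exp ((t - s) • Aᵀ))
        = ∫ s in (0:ℝ)..t, G s * S * (G s)ᵀ := by
      have h1 : ∀ r : ℝ, NormedSpace.exp (r • A) * B * S * Bᵀ * NormedSpace.exp (r • Aᵀ)
          = NormedSpace.exp (r • A) * B * S * (NormedSpace.exp (r • A) * B)ᵀ := by
        intro r
        rw [← Matrix.transpose_smul, Matrix.exp_transpose, Matrix.transpose_mul,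
          Matrix.mul_assoc (NormedSpace.exp (r • A) * B * S)]
      simp only [h1]
      have h := intervalIntegral.integral_comp_sub_left (a := (0:ℝ)) (b := t)
        (f := fun s => NormedSpace.exp (s • A) * B * S * (NormedSpace.exp (s • A) * B)ᵀ) t
      simpa [hGdef] using h
    rw [hΨ, hK]
    set P : Matrix (Fin d) (Fin m) ℝ := ∫ s in (0:ℝ)..t, G s with hP
    set Kt : Matrix (Fin d) (Fin d) ℝ := ∫ s in (0:ℝ)..t, G s * S * (G s)ᵀ with hKt
    -- continuity facts
    have hGSc : Continuous fun s => G s * S := hGc.matrix_mul continuous_const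
    have hGSGc : Continuous fun s => G s * S * (G s)ᵀ := hGSc.matrix_mul hGTc
    have hF1c : Continuous fun s => (∫ u in (0:ℝ)..t, G s * S * (G u)ᵀ) := by
      apply intervalIntegral.continuous_parametric_intervalIntegral_of_continuous'
      exact ((hGc.comp continuous_fst).matrix_mul continuous_const).matrix_mul
        (hGTc.comp continuous_snd)
    have hF2c : Continuous fun s => (∫ u in (0:ℝ)..t, G u * S * (G s)ᵀ) := by
      apply intervalIntegral.continuous_parametric_intervalIntegral_of_continuous'
      exact ((hGc.comp continuous_snd).matrix_mul continuous_const).matrix_mul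
        (hGTc.comp continuous_fst)
    -- Claim 1 : P * S * Pᵀ as a double integral
    have claim1 : P * S * Pᵀ = ∫ s in (0:ℝ)..t, ∫ u in (0:ℝ)..t, G s * S * (G u)ᵀ := by
      rw [hP, intInt_mul_const hGc S, intInt_transpose hGc, intInt_mul_const hGSc]
      apply intervalIntegral.integral_congr
      intro s _
      exact intInt_const_mul hGTc (G s * S)
    -- Claim 2 : t • Kt two ways
    have claim2 : t • Kt = ∫ s in (0:ℝ)..t, t • (G s * S * (G s)ᵀ) := by
      rw [hKt, intervalIntegral.integral_smul]
    have claim2' : t • Kt = ∫ s in (0:ℝ)..t, Kt := by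
      rw [intervalIntegral.integral_const, sub_zero]
    -- symmetry facts
    have hKtT : Ktᵀ = Kt := by
      rw [hKt, intInt_transpose hGSGc]
      apply intervalIntegral.integral_congr
      intro s _
      simp [Matrix.transpose_mul, Matrix.mul_assoc, hSt]
    have hDT : (P * S * Pᵀ - t • Kt)ᵀ = P * S * Pᵀ - t • Kt := by
      rw [Matrix.transpose_sub, Matrix.transpose_smul, hKtT]
      congr 1
      simp [Matrix.transpose_mul, Matrix.mul_assoc, hSt]
    -- transpose of the double integral
    have claimF1T : (∫ s in (0:ℝ)..t, ∫ u in (0:ℝ)..t, G s * S * (G u)ᵀ)ᵀ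
        = ∫ s in (0:ℝ)..t, ∫ u in (0:ℝ)..t, G u * S * (G s)ᵀ := by
      rw [intInt_transpose hF1c]
      apply intervalIntegral.integral_congr
      intro s _
      show (∫ u in (0:ℝ)..t, G s * S * (G u)ᵀ)ᵀ = ∫ u in (0:ℝ)..t, G u * S * (G s)ᵀ
      rw [intInt_transpose (continuous_const.matrix_mul hGTc)]
      apply intervalIntegral.integral_congr
      intro u _
      simp [Matrix.transpose_mul, Matrix.mul_assoc, hSt]
    -- inner decomposition of H
    have hinner : ∀ s : ℝ,
        (∫ u in (0:ℝ)..t, (G s - G u) * S * (G s - G u)ᵀ)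
          = t • (G s * S * (G s)ᵀ) + Kt - (∫ u in (0:ℝ)..t, G s * S * (G u)ᵀ)
            - (∫ u in (0:ℝ)..t, G u * S * (G s)ᵀ) := by
      intro s
      have e1 : ∀ u : ℝ, (G s - G u) * S * (G s - G u)ᵀ
          = G s * S * (G s)ᵀ - G s * S * (G u)ᵀ - G u * S * (G s)ᵀ + G u * S * (G u)ᵀ := by
        intro u
        rw [Matrix.transpose_sub, Matrix.sub_mul, Matrix.sub_mul, Matrix.mul_sub, Matrix.mul_sub]
        abel
      rw [intervalIntegral.integral_congr (fun u _ => e1 u)]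
      have c2 : Continuous fun u => G s * S * (G u)ᵀ := continuous_const.matrix_mul hGTc
      have c3 : Continuous fun u => G u * S * (G s)ᵀ := hGSc.matrix_mul continuous_const
      rw [intervalIntegral.integral_add
          (f := fun u => G s * S * (G s)ᵀ - G s * S * (G u)ᵀ - G u * S * (G s)ᵀ)
          (((continuous_const.sub c2).sub c3).intervalIntegrable _ _)
          (hGSGc.intervalIntegrable _ _),
        intervalIntegral.integral_sub
          (f := fun u => G s * S * (G s)ᵀ - G s * S * (G u)ᵀ)
          ((continuous_const.sub c2).intervalIntegrable _ _) (c3.intervalIntegrable _ _),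
        intervalIntegral.integral_sub
          ((continuous_const (y := G s * S * (G s)ᵀ)).intervalIntegrable _ _)
          (c2.intervalIntegrable _ _),
        intervalIntegral.integral_const, sub_zero, ← hKt]
      abel
    -- outer combination
    have hOuter : (∫ s in (0:ℝ)..t, ∫ u in (0:ℝ)..t, (G s - G u) * S * (G s - G u)ᵀ)
        = t • Kt + t • Kt - (∫ s in (0:ℝ)..t, ∫ u in (0:ℝ)..t, G s * S * (G u)ᵀ)
          - (∫ s in (0:ℝ)..t, ∫ u in (0:ℝ)..t, G u * S * (G s)ᵀ) := by
      rw [intervalIntegral.integral_congr (fun s _ => hinner s)]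
      have d1 : Continuous fun s => t • (G s * S * (G s)ᵀ) := hGSGc.const_smul t
      rw [intervalIntegral.integral_sub
          (f := fun s => t • (G s * S * (G s)ᵀ) + Kt - ∫ u in (0:ℝ)..t, G s * S * (G u)ᵀ)
          (((d1.add continuous_const).sub hF1c).intervalIntegrable _ _)
          (hF2c.intervalIntegrable _ _),
        intervalIntegral.integral_sub
          (f := fun s => t • (G s * S * (G s)ᵀ) + Kt)
          ((d1.add continuous_const).intervalIntegrable _ _) (hF1c.intervalIntegrable _ _),
        intervalIntegral.integral_add (d1.intervalIntegrable _ _)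
          (continuous_const.intervalIntegrable _ _),
        ← claim2, intervalIntegral.integral_const, sub_zero]
    -- the symmetrization identity
    have hEq : (∫ s in (0:ℝ)..t, ∫ u in (0:ℝ)..t, (G s - G u) * S * (G s - G u)ᵀ)
        = -((P * S * Pᵀ - t • Kt) + (P * S * Pᵀ - t • Kt)) := by
      have e1 : (∫ s in (0:ℝ)..t, ∫ u in (0:ℝ)..t, G s * S * (G u)ᵀ)
          = (P * S * Pᵀ - t • Kt) + t • Kt := by rw [claim1]; abel
      have e2 : (∫ s in (0:ℝ)..t, ∫ u in (0:ℝ)..t, G u * S * (G s)ᵀ)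
          = (P * S * Pᵀ - t • Kt) + t • Kt := by
        rw [← claimF1T, e1, Matrix.transpose_add, Matrix.transpose_smul, hKtT, hDT]
      rw [hOuter, e1, e2]
      abel
    -- now the trace bound
    have htr2 : (2:ℝ) * Matrix.trace (Q * (P * S * Pᵀ - t • Kt))
        = - Matrix.trace (Q * ∫ s in (0:ℝ)..t, ∫ u in (0:ℝ)..t, (G s - G u) * S * (G s - G u)ᵀ) := by
      rw [hEq, Matrix.mul_neg, Matrix.trace_neg, neg_neg, Matrix.mul_add, Matrix.trace_add]
      ring
    -- norm bound on the double integral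
    have hHs : ∀ s ∈ Set.uIoc (0:ℝ) t,
        ‖∫ u in (0:ℝ)..t, (G s - G u) * S * (G s - G u)ᵀ‖ ≤ (‖S‖ * (L^2 * δ^2)) * δ := by
      intro s hs
      rw [Set.uIoc_of_le ht0.le] at hs
      have hbound : ∀ u ∈ Set.uIoc (0:ℝ) t,
          ‖(G s - G u) * S * (G s - G u)ᵀ‖ ≤ ‖S‖ * (L^2 * δ^2) := by
        intro u hu
        rw [Set.uIoc_of_le ht0.le] at hu
        have hsI : s ∈ Set.Icc (0:ℝ) 1 := ⟨hs.1.le, le_trans hs.2 ht1⟩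
        have huI : u ∈ Set.Icc (0:ℝ) 1 := ⟨hu.1.le, le_trans hu.2 ht1⟩
        have hd : |s - u| ≤ δ := by
          rw [abs_sub_le_iff]
          constructor <;> [linarith [hs.2, hu.1, htδ]; linarith [hu.2, hs.1, htδ]]
        have hlip : ‖G s - G u‖ ≤ L * δ := by
          calc ‖G s - G u‖ ≤ L * |s - u| := hLip s hsI u huI
            _ ≤ L * δ := by gcongr
        calc ‖(G s - G u) * S * (G s - G u)ᵀ‖
            ≤ ‖(G s - G u) * S‖ * ‖(G s - G u)ᵀ‖ := Matrix.l2_opNorm_mul _ _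
          _ ≤ ‖G s - G u‖ * ‖S‖ * ‖(G s - G u)ᵀ‖ := by
              gcongr
              exact Matrix.l2_opNorm_mul _ _
          _ = ‖G s - G u‖ * ‖S‖ * ‖G s - G u‖ := by rw [norm_transpose_l2]
          _ ≤ (L * δ) * ‖S‖ * (L * δ) := by gcongr <;> positivity
          _ = ‖S‖ * (L^2 * δ^2) := by ring
      calc ‖∫ u in (0:ℝ)..t, (G s - G u) * S * (G s - G u)ᵀ‖
          ≤ (‖S‖ * (L^2 * δ^2)) * |t - 0| := intervalIntegral.norm_integral_le_of_norm_le_const hbound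
        _ ≤ (‖S‖ * (L^2 * δ^2)) * δ := by
            rw [sub_zero, abs_of_pos ht0]; gcongr
    have hHnorm : ‖∫ s in (0:ℝ)..t, ∫ u in (0:ℝ)..t, (G s - G u) * S * (G s - G u)ᵀ‖
        ≤ (‖S‖ * (L^2 * δ^2)) * δ * δ := by
      calc ‖∫ s in (0:ℝ)..t, ∫ u in (0:ℝ)..t, (G s - G u) * S * (G s - G u)ᵀ‖
          ≤ ((‖S‖ * (L^2 * δ^2)) * δ) * |t - 0| :=
            intervalIntegral.norm_integral_le_of_norm_le_const hHs
        _ ≤ (‖S‖ * (L^2 * δ^2)) * δ * δ := by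
            rw [sub_zero, abs_of_pos ht0]; gcongr
    -- conclude
    have hfinal : |Matrix.trace (Q * (P * S * Pᵀ - t • Kt))|
        ≤ K0 * δ ^ 4 := by
      have h1 : |Matrix.trace (Q * ∫ s in (0:ℝ)..t, ∫ u in (0:ℝ)..t,
            (G s - G u) * S * (G s - G u)ᵀ)|
          ≤ ‖Ltr‖ * (‖Q‖ * ((‖S‖ * (L^2 * δ^2)) * δ * δ)) := by
        calc |Matrix.trace (Q * ∫ s in (0:ℝ)..t, ∫ u in (0:ℝ)..t,
              (G s - G u) * S * (G s - G u)ᵀ)|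
            ≤ ‖Ltr‖ * ‖Q * ∫ s in (0:ℝ)..t, ∫ u in (0:ℝ)..t,
                (G s - G u) * S * (G s - G u)ᵀ‖ := htrace_bound _
          _ ≤ ‖Ltr‖ * (‖Q‖ * ‖∫ s in (0:ℝ)..t, ∫ u in (0:ℝ)..t,
                (G s - G u) * S * (G s - G u)ᵀ‖) := by
              gcongr
              exact Matrix.l2_opNorm_mul _ _
          _ ≤ ‖Ltr‖ * (‖Q‖ * ((‖S‖ * (L^2 * δ^2)) * δ * δ)) := by gcongr
      have h2 : (2:ℝ) * |Matrix.trace (Q * (P * S * Pᵀ - t • Kt))|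
          ≤ ‖Ltr‖ * (‖Q‖ * ((‖S‖ * (L^2 * δ^2)) * δ * δ)) := by
        rw [show (2:ℝ) * |Matrix.trace (Q * (P * S * Pᵀ - t • Kt))|
            = |(2:ℝ) * Matrix.trace (Q * (P * S * Pᵀ - t • Kt))| by
          rw [abs_mul]; norm_num]
        rw [htr2, abs_neg]
        exact h1
      have h3 : ‖Ltr‖ * (‖Q‖ * ((‖S‖ * (L^2 * δ^2)) * δ * δ)) = K0 * δ ^ 4 := by
        rw [hK0def]; ring
      rw [h3] at h2
      have h0 := abs_nonneg (Matrix.trace (Q * (P * S * Pᵀ - t • Kt)))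
      linarith
    rw [Real.norm_eq_abs]
    calc |Matrix.trace (Q * (P * S * Pᵀ - t • Kt))| ≤ K0 * δ ^ 4 := hfinal
      _ ≤ (K0 + 1) * δ ^ 4 := mul_le_mul_of_nonneg_right (by linarith) (by positivity)
  calc ‖∫ t in (0:ℝ)..δ, Matrix.trace (Q *
            ((∫ s in (0 : ℝ)..t, NormedSpace.exp ((t - s) • A) * B) * S
                * (∫ s in (0 : ℝ)..t, NormedSpace.exp ((t - s) • A) * B)ᵀ
              - t • (∫ s in (0 : ℝ)..t,
                  NormedSpace.exp ((t - s) • A) * B * S * Bᵀ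
                    * NormedSpace.exp ((t - s) • Aᵀ))))‖
      ≤ ((K0 + 1) * δ ^ 4) * |δ - 0| := intervalIntegral.norm_integral_le_of_norm_le_const key
    _ = (K0 + 1) * δ ^ 5 := by rw [sub_zero, abs_of_pos hδ]; ring
end

section
/- Let R be a d×d real symmetric positive definite matrix, b ∈ ℝ^d, λ₀ ≥ 0, and c ≥ ‖(R + λ₀ I)⁻¹ b‖². Then the function g(λ) = bᵀ(R + λI)⁻¹ b + λ c is monotone nondecreasing on [λ₀, ∞); in particular g(λ) ≥ g(λ₀) for all λ ≥ λ₀, so the infimum of g over [λ₀, ∞) is attained at λ₀. -/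
open Matrix

namespace DualAux

variable {d : ℕ}

lemma dot_self_nonneg (v : Fin d → ℝ) : 0 ≤ v ⬝ᵥ v :=
  Finset.sum_nonneg fun i _ => mul_self_nonneg _

lemma posdef_shift {R : Matrix (Fin d) (Fin d) ℝ} (hR : R.PosDef) {l : ℝ} (hl : 0 ≤ l) :
    (R + l • (1 : Matrix (Fin d) (Fin d) ℝ)).PosDef := by
  refine Matrix.PosDef.of_dotProduct_mulVec_pos ?_ ?_
  · exact hR.1.add (by simp [Matrix.IsHermitian])
  · intro x hx
    have h1 : (0:ℝ) < star x ⬝ᵥ R *ᵥ x := hR.dotProduct_mulVec_pos hx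
    have h2 : (0:ℝ) ≤ x ⬝ᵥ x := dot_self_nonneg x
    simp only [add_mulVec, smul_mulVec, one_mulVec, dotProduct_add, dotProduct_smul,
      star_trivial, smul_eq_mul] at *
    nlinarith

lemma cancel_vec {R : Matrix (Fin d) (Fin d) ℝ} (hR : R.PosDef) {l : ℝ} (hl : 0 ≤ l)
    (v : Fin d → ℝ) :
    (R + l • (1 : Matrix (Fin d) (Fin d) ℝ)) *ᵥ
      ((R + l • (1 : Matrix (Fin d) (Fin d) ℝ))⁻¹ *ᵥ v) = v := by
  rw [mulVec_mulVec, Matrix.mul_nonsing_inv _ (posdef_shift hR hl).det_pos.ne'.isUnit, one_mulVec]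

lemma cancel_vec' {R : Matrix (Fin d) (Fin d) ℝ} (hR : R.PosDef) {l : ℝ} (hl : 0 ≤ l)
    (v : Fin d → ℝ) :
    (R + l • (1 : Matrix (Fin d) (Fin d) ℝ))⁻¹ *ᵥ
      ((R + l • (1 : Matrix (Fin d) (Fin d) ℝ)) *ᵥ v) = v := by
  rw [mulVec_mulVec, Matrix.nonsing_inv_mul _ (posdef_shift hR hl).det_pos.ne'.isUnit, one_mulVec]

end DualAux

namespace DualAux
variable {d : ℕ}

lemma shift_formula {R : Matrix (Fin d) (Fin d) ℝ} (hR : R.PosDef) (b : Fin d → ℝ)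
    {a l : ℝ} (ha : 0 ≤ a) (hal : a ≤ l) :
    (R + a • (1 : Matrix (Fin d) (Fin d) ℝ))⁻¹ *ᵥ b =
      (R + l • (1 : Matrix (Fin d) (Fin d) ℝ))⁻¹ *ᵥ b
      + (l - a) • ((R + a • (1 : Matrix (Fin d) (Fin d) ℝ))⁻¹ *ᵥ
          ((R + l • (1 : Matrix (Fin d) (Fin d) ℝ))⁻¹ *ᵥ b)) := by
  have hl : 0 ≤ l := ha.trans hal
  set Sa := R + a • (1 : Matrix (Fin d) (Fin d) ℝ) with hSa
  set Sl := R + l • (1 : Matrix (Fin d) (Fin d) ℝ) with hSl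
  set v := Sl⁻¹ *ᵥ b with hv
  set w := Sa⁻¹ *ᵥ v with hw
  have hSav : Sa *ᵥ v = b + (a - l) • v := by
    have : Sa = Sl + (a - l) • (1 : Matrix (Fin d) (Fin d) ℝ) := by
      rw [hSa, hSl]; rw [add_assoc, ← add_smul]; ring_nf
    rw [this, add_mulVec, smul_mulVec, one_mulVec, hv, cancel_vec hR hl]
  have key : Sa *ᵥ (v + (l - a) • w) = b := by
    rw [mulVec_add, mulVec_smul, hw, cancel_vec hR ha, hSav]
    module
  calc Sa⁻¹ *ᵥ b = Sa⁻¹ *ᵥ (Sa *ᵥ (v + (l - a) • w)) := by rw [key]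
    _ = v + (l - a) • w := cancel_vec' hR ha _

lemma contraction {R : Matrix (Fin d) (Fin d) ℝ} (hR : R.PosDef) (b : Fin d → ℝ)
    {a l : ℝ} (ha : 0 ≤ a) (hal : a ≤ l) :
    ((R + l • (1 : Matrix (Fin d) (Fin d) ℝ))⁻¹ *ᵥ b) ⬝ᵥ
      ((R + l • (1 : Matrix (Fin d) (Fin d) ℝ))⁻¹ *ᵥ b) ≤
    ((R + a • (1 : Matrix (Fin d) (Fin d) ℝ))⁻¹ *ᵥ b) ⬝ᵥ
      ((R + a • (1 : Matrix (Fin d) (Fin d) ℝ))⁻¹ *ᵥ b) := by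
  set Sa := R + a • (1 : Matrix (Fin d) (Fin d) ℝ) with hSa
  set Sl := R + l • (1 : Matrix (Fin d) (Fin d) ℝ) with hSl
  set v := Sl⁻¹ *ᵥ b with hv
  set w := Sa⁻¹ *ᵥ v with hw
  have hu : Sa⁻¹ *ᵥ b = v + (l - a) • w := shift_formula hR b ha hal
  have hcross : 0 ≤ v ⬝ᵥ w := by
    have := (posdef_shift hR ha).inv.posSemidef.dotProduct_mulVec_nonneg v
    simpa [hw] using this
  have hww : 0 ≤ w ⬝ᵥ w := dot_self_nonneg w
  have hs : 0 ≤ l - a := by linarith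
  rw [hu]
  simp only [dotProduct_add, add_dotProduct, dotProduct_smul, smul_dotProduct, smul_eq_mul]
  have hcomm : w ⬝ᵥ v = v ⬝ᵥ w := dotProduct_comm _ _
  nlinarith [mul_nonneg hs hcross, mul_nonneg (mul_nonneg hs hs) hww]

end DualAux

namespace DualAux
variable {d : ℕ}

lemma dot_mulVec_symm {R : Matrix (Fin d) (Fin d) ℝ} (hR : R.PosDef) {l : ℝ} (hl : 0 ≤ l)
    (b q : Fin d → ℝ) :
    b ⬝ᵥ ((R + l • (1 : Matrix (Fin d) (Fin d) ℝ))⁻¹ *ᵥ q) =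
      ((R + l • (1 : Matrix (Fin d) (Fin d) ℝ))⁻¹ *ᵥ b) ⬝ᵥ q := by
  set M := (R + l • (1 : Matrix (Fin d) (Fin d) ℝ))⁻¹ with hM
  have hherm : Mᴴ = M := (posdef_shift hR hl).inv.1
  have hsymm : Mᵀ = M := by
    ext i j
    have h := congrFun (congrFun hherm i) j
    simpa [conjTranspose_apply] using h
  rw [dotProduct_mulVec, ← mulVec_transpose, hsymm]

lemma g_mono {R : Matrix (Fin d) (Fin d) ℝ} (hR : R.PosDef) (b : Fin d → ℝ) {l₀ : ℝ}
    (hl₀ : 0 ≤ l₀) {c : ℝ}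
    (hc : ((R + l₀ • (1 : Matrix (Fin d) (Fin d) ℝ))⁻¹).mulVec b
        ⬝ᵥ ((R + l₀ • (1 : Matrix (Fin d) (Fin d) ℝ))⁻¹).mulVec b ≤ c)
    {x y : ℝ} (hx : l₀ ≤ x) (hxy : x ≤ y) :
    b ⬝ᵥ ((R + x • (1 : Matrix (Fin d) (Fin d) ℝ))⁻¹).mulVec b + x * c ≤
      b ⬝ᵥ ((R + y • (1 : Matrix (Fin d) (Fin d) ℝ))⁻¹).mulVec b + y * c := by
  have hx0 : 0 ≤ x := hl₀.trans hx
  have hy0 : 0 ≤ y := hx0.trans hxy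
  set p := (R + x • (1 : Matrix (Fin d) (Fin d) ℝ))⁻¹ *ᵥ b with hp
  set q := (R + y • (1 : Matrix (Fin d) (Fin d) ℝ))⁻¹ *ᵥ b with hq
  -- resolvent : p = q + (y - x) • (Sx⁻¹ *ᵥ q)
  have hres : (R + x • (1 : Matrix (Fin d) (Fin d) ℝ))⁻¹ *ᵥ b =
      q + (y - x) • ((R + x • (1 : Matrix (Fin d) (Fin d) ℝ))⁻¹ *ᵥ q) :=
    shift_formula hR b hx0 hxy
  have hdiff : b ⬝ᵥ p - b ⬝ᵥ q = (y - x) * (p ⬝ᵥ q) := by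
    rw [hp, hres]
    simp only [dotProduct_add, dotProduct_smul, smul_eq_mul]
    rw [dot_mulVec_symm hR hx0, ← hres, ← hp]
    ring
  -- p ⬝ q ≤ c via 2 p⬝q ≤ p⬝p + q⬝q ≤ 2c
  have hpp : p ⬝ᵥ p ≤ c := le_trans (contraction hR b hl₀ hx) hc
  have hqq : q ⬝ᵥ q ≤ c := le_trans (contraction hR b hl₀ (hx.trans hxy)) hc
  have hsq : 0 ≤ (p - q) ⬝ᵥ (p - q) := dot_self_nonneg _
  have hexp : (p - q) ⬝ᵥ (p - q) = p ⬝ᵥ p - 2 * (p ⬝ᵥ q) + q ⬝ᵥ q := by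
    simp only [sub_dotProduct, dotProduct_sub]
    rw [dotProduct_comm q p]; ring
  have hpq : p ⬝ᵥ q ≤ c := by nlinarith
  have : b ⬝ᵥ p - b ⬝ᵥ q ≤ (y - x) * c := by
    rw [hdiff]
    exact mul_le_mul_of_nonneg_left hpq (by linarith)
  nlinarith

end DualAux


/-- If `c ≥ ‖(R + λ₀I)⁻¹b‖²` for some `λ₀ ≥ 0`, then the dual function
`g(λ) = bᵀ(R+λI)⁻¹b + λc` is monotone nondecreasing on `[λ₀, ∞)`; in particular
`g(λ) ≥ g(λ₀)` for `λ ≥ λ₀`, so the infimum of `g` over `[λ₀, ∞)` is attained at `λ₀`. -/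
theorem dual_function_monotone_from_capacity (d : ℕ) (hd : 1 ≤ d)
    (R : Matrix (Fin d) (Fin d) ℝ) (hR : R.PosDef) (b : Fin d → ℝ) (l₀ : ℝ)
    (hl₀ : 0 ≤ l₀) (c : ℝ)
    (hc : ((R + l₀ • (1 : Matrix (Fin d) (Fin d) ℝ))⁻¹).mulVec b
        ⬝ᵥ ((R + l₀ • (1 : Matrix (Fin d) (Fin d) ℝ))⁻¹).mulVec b ≤ c) :
    MonotoneOn
      (fun l : ℝ => b ⬝ᵥ ((R + l • (1 : Matrix (Fin d) (Fin d) ℝ))⁻¹).mulVec b + l * c)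
      (Set.Ici l₀)
    ∧ IsLeast
        ((fun l : ℝ => b ⬝ᵥ ((R + l • (1 : Matrix (Fin d) (Fin d) ℝ))⁻¹).mulVec b + l * c)
          '' Set.Ici l₀)
        (b ⬝ᵥ ((R + l₀ • (1 : Matrix (Fin d) (Fin d) ℝ))⁻¹).mulVec b + l₀ * c) := by
  constructor
  · intro x hx y hy hxy
    exact DualAux.g_mono hR b hl₀ hc hx hxy
  · constructor
    · exact ⟨l₀, Set.self_mem_Ici, rfl⟩
    · rintro z ⟨l, hl, rfl⟩
      exact DualAux.g_mono hR b hl₀ hc le_rfl hl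
end

section
/- Let R be a d×d real symmetric positive definite matrix, M a d×d real symmetric matrix whose largest eigenvalue λ₂ = λ_max(M) satisfies λ₂ > 0, let v be a unit eigenvector of M for λ₂, let b ∈ ℝ^d, and let ρ ≥ ‖(R + λ₂ I)⁻¹ b‖². Then the supremum over Γ ∈ ℝ^d and symmetric positive semidefinite d×d matrices Σ, subject to ‖Γ‖² + tr(Σ) ≤ ρ, of the functional 2 bᵀΓ − ΓᵀRΓ + tr(MΣ) equals bᵀ(R + λ₂ I)⁻¹ b + λ₂ ρ, and it is attained at Γ* = (R + λ₂ I)⁻¹ b and Σ* = (ρ − ‖Γ*‖²) · v vᵀ; in particular the energy constraint is active at the optimum: ‖Γ*‖² + tr(Σ*) = ρ. -/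
open Matrix

section Aux
variable {d : ℕ}

lemma myTrace_psd_nonneg {S : Matrix (Fin d) (Fin d) ℝ} (hS : S.PosSemidef) : 0 ≤ S.trace := by
  refine Finset.sum_nonneg fun i _ => ?_
  have h := hS.dotProduct_mulVec_nonneg (Pi.single i 1)
  simpa [dotProduct, mulVec, Pi.single_apply, Finset.sum_ite_eq, mul_comm] using h

lemma myTrace_mul_psd_nonneg {P S : Matrix (Fin d) (Fin d) ℝ} (hP : P.PosSemidef)
    (hS : S.PosSemidef) : 0 ≤ (P * S).trace := by
  open scoped MatrixOrder in obtain ⟨B, rfl⟩ := CStarAlgebra.nonneg_iff_eq_star_mul_self.mp hS.nonneg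
  rw [star_eq_conjTranspose]
  have h1 : (P * (Bᴴ * B)).trace = (B * P * Bᴴ).trace := by
    rw [← Matrix.mul_assoc, trace_mul_comm, Matrix.mul_assoc]
  rw [h1]
  exact myTrace_psd_nonneg (hP.mul_mul_conjTranspose_same B)

end Aux

/-- Active (variance-injection) case of the maximizer's subproblem. For
`R` symmetric positive definite, `M` symmetric with largest eigenvalue `lam > 0`, `v` a
unit eigenvector of `M` for `lam`, and `ρ ≥ ‖(R+lam·I)⁻¹b‖²`, the supremum of
`2bᵀΓ − ΓᵀRΓ + tr(MΣ)` over `Γ` and positive semidefinite `Σ` with `‖Γ‖² + tr Σ ≤ ρ`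
equals `bᵀ(R+lam·I)⁻¹b + lam·ρ`, attained at `Γ* = (R+lam·I)⁻¹b` and
`Σ* = (ρ − ‖Γ*‖²)·vvᵀ`; in particular the energy constraint is active at the optimum. -/
theorem maximizer_subproblem_active (d : ℕ) (hd : 1 ≤ d)
    (R M : Matrix (Fin d) (Fin d) ℝ) (hR : R.PosDef) (hM : M.IsSymm)
    (lam : ℝ)
    (hlam : IsGreatest {x : ℝ | ∃ w : Fin d → ℝ, w ≠ 0 ∧ M.mulVec w = x • w} lam)
    (hlam_pos : 0 < lam)
    (v : Fin d → ℝ) (hv : M.mulVec v = lam • v) (hv_unit : (∑ i, v i ^ 2) = 1)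
    (b : Fin d → ℝ) (ρ : ℝ)
    (hρ : ((R + lam • (1 : Matrix (Fin d) (Fin d) ℝ))⁻¹).mulVec b
        ⬝ᵥ ((R + lam • (1 : Matrix (Fin d) (Fin d) ℝ))⁻¹).mulVec b ≤ ρ) :
    IsGreatest {x : ℝ | ∃ (Γ : Fin d → ℝ) (S : Matrix (Fin d) (Fin d) ℝ),
        S.PosSemidef ∧ Γ ⬝ᵥ Γ + S.trace ≤ ρ ∧
        x = 2 * (b ⬝ᵥ Γ) - Γ ⬝ᵥ R.mulVec Γ + (M * S).trace}
      (b ⬝ᵥ ((R + lam • (1 : Matrix (Fin d) (Fin d) ℝ))⁻¹).mulVec b + lam * ρ)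
    ∧ ((ρ - ((R + lam • (1 : Matrix (Fin d) (Fin d) ℝ))⁻¹).mulVec b
          ⬝ᵥ ((R + lam • (1 : Matrix (Fin d) (Fin d) ℝ))⁻¹).mulVec b)
        • Matrix.vecMulVec v v).PosSemidef
    ∧ (2 * (b ⬝ᵥ ((R + lam • (1 : Matrix (Fin d) (Fin d) ℝ))⁻¹).mulVec b)
        - ((R + lam • (1 : Matrix (Fin d) (Fin d) ℝ))⁻¹).mulVec b
            ⬝ᵥ R.mulVec (((R + lam • (1 : Matrix (Fin d) (Fin d) ℝ))⁻¹).mulVec b)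
        + (M * ((ρ - ((R + lam • (1 : Matrix (Fin d) (Fin d) ℝ))⁻¹).mulVec b
              ⬝ᵥ ((R + lam • (1 : Matrix (Fin d) (Fin d) ℝ))⁻¹).mulVec b)
            • Matrix.vecMulVec v v)).trace
        = b ⬝ᵥ ((R + lam • (1 : Matrix (Fin d) (Fin d) ℝ))⁻¹).mulVec b + lam * ρ)
    ∧ (((R + lam • (1 : Matrix (Fin d) (Fin d) ℝ))⁻¹).mulVec b
          ⬝ᵥ ((R + lam • (1 : Matrix (Fin d) (Fin d) ℝ))⁻¹).mulVec b
        + ((ρ - ((R + lam • (1 : Matrix (Fin d) (Fin d) ℝ))⁻¹).mulVec b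
              ⬝ᵥ ((R + lam • (1 : Matrix (Fin d) (Fin d) ℝ))⁻¹).mulVec b)
            • Matrix.vecMulVec v v).trace = ρ) := by
  classical
  set A : Matrix (Fin d) (Fin d) ℝ := R + lam • (1 : Matrix (Fin d) (Fin d) ℝ) with hAdef
  set g : Fin d → ℝ := A⁻¹.mulVec b with hgdef
  -- Hermitian facts
  have hM' : M.IsHermitian := by
    rw [Matrix.IsHermitian, conjTranspose_eq_transpose_of_trivial]; exact hM
  have hRh : R.IsHermitian := hR.1
  -- A is positive definite
  have hApd : A.PosDef := by
    refine Matrix.PosDef.of_dotProduct_mulVec_pos ?_ ?_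
    · rw [Matrix.IsHermitian, hAdef, conjTranspose_add, conjTranspose_smul, conjTranspose_one,
        hRh.eq, star_trivial]
    · intro x hx
      have h1 := hR.dotProduct_mulVec_pos hx
      have h2 : (0:ℝ) ≤ x ⬝ᵥ x := Finset.sum_nonneg fun i _ => mul_self_nonneg _
      have hsx : star x = x := star_trivial x
      rw [hsx] at h1 ⊢
      have : x ⬝ᵥ A.mulVec x = x ⬝ᵥ R.mulVec x + lam * (x ⬝ᵥ x) := by
        rw [hAdef, add_mulVec, smul_mulVec, one_mulVec, dotProduct_add,
          dotProduct_smul, smul_eq_mul]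
      rw [this]
      nlinarith [mul_nonneg hlam_pos.le h2]
  have hAherm : Aᵀ = A := by
    rw [← conjTranspose_eq_transpose_of_trivial]; exact hApd.1
  have hAg : A.mulVec g = b := by
    rw [hgdef, mulVec_mulVec, Matrix.mul_nonsing_inv A (isUnit_iff_ne_zero.mpr hApd.det_pos.ne'),
      one_mulVec]
  -- symmetric dot product shuffles
  have hdotA : ∀ x y : Fin d → ℝ, x ⬝ᵥ A.mulVec y = A.mulVec x ⬝ᵥ y := by
    intro x y
    rw [dotProduct_mulVec]
    nth_rewrite 1 [← hAherm]
    rw [vecMul_transpose]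
  -- quadratic bound
  have hAexp : ∀ x : Fin d → ℝ, x ⬝ᵥ A.mulVec x = x ⬝ᵥ R.mulVec x + lam * (x ⬝ᵥ x) := by
    intro x
    rw [hAdef, add_mulVec, smul_mulVec, one_mulVec, dotProduct_add,
      dotProduct_smul, smul_eq_mul]
  have hquad : ∀ Γ : Fin d → ℝ, 2 * (b ⬝ᵥ Γ) - Γ ⬝ᵥ A.mulVec Γ ≤ b ⬝ᵥ g := by
    intro Γ
    have h0 : 0 ≤ (Γ - g) ⬝ᵥ A.mulVec (Γ - g) := by
      have := hApd.posSemidef.dotProduct_mulVec_nonneg (Γ - g)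
      rwa [star_trivial] at this
    have e1 : Γ ⬝ᵥ A.mulVec g = b ⬝ᵥ Γ := by rw [hAg, dotProduct_comm]
    have e2 : g ⬝ᵥ A.mulVec Γ = b ⬝ᵥ Γ := by rw [hdotA, hAg]
    have e3 : g ⬝ᵥ A.mulVec g = b ⬝ᵥ g := by rw [hdotA, hAg]
    have hexp : (Γ - g) ⬝ᵥ A.mulVec (Γ - g)
        = Γ ⬝ᵥ A.mulVec Γ - 2 * (b ⬝ᵥ Γ) + b ⬝ᵥ g := by
      rw [mulVec_sub, dotProduct_sub, sub_dotProduct, sub_dotProduct, e1, e2, e3]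
      ring
    rw [hexp] at h0
    linarith
  -- trace bound for M against psd matrices
  have hMtr : ∀ S : Matrix (Fin d) (Fin d) ℝ, S.PosSemidef → (M * S).trace ≤ lam * S.trace := by
    intro S hS
    have hL : (lam • (1 : Matrix (Fin d) (Fin d) ℝ) - M).IsHermitian := by
      rw [Matrix.IsHermitian, conjTranspose_sub, conjTranspose_smul, conjTranspose_one,
        hM'.eq, star_trivial]
    have hLpsd : (lam • (1 : Matrix (Fin d) (Fin d) ℝ) - M).PosSemidef := by
      apply hL.posSemidef_iff_eigenvalues_nonneg.mpr
      intro i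
      set w : Fin d → ℝ := ⇑(hL.eigenvectorBasis i) with hwdef
      have hw := hL.mulVec_eigenvectorBasis i
      have hwne : w ≠ 0 := (WithLp.ofLp_eq_zero (p := 2)).not.mpr (hL.eigenvectorBasis.orthonormal.ne_zero i)
      have hMw : M.mulVec w = (lam - hL.eigenvalues i) • w := by
        have h1 : (lam • (1 : Matrix (Fin d) (Fin d) ℝ) - M).mulVec w
            = lam • w - M.mulVec w := by
          rw [sub_mulVec, smul_mulVec, one_mulVec]
        rw [h1] at hw
        funext j
        have := congrFun hw j
        simp only [Pi.sub_apply, Pi.smul_apply, smul_eq_mul] at this ⊢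
        linarith
      have hle : lam - hL.eigenvalues i ≤ lam := hlam.2 ⟨w, hwne, hMw⟩
      show (0:ℝ) ≤ _; linarith
    have h2 : 0 ≤ ((lam • (1 : Matrix (Fin d) (Fin d) ℝ) - M) * S).trace :=
      myTrace_mul_psd_nonneg hLpsd hS
    have h3 : ((lam • (1 : Matrix (Fin d) (Fin d) ℝ) - M) * S).trace
        = lam * S.trace - (M * S).trace := by
      rw [Matrix.sub_mul, Matrix.smul_mul, Matrix.one_mul, trace_sub, trace_smul, smul_eq_mul]
    linarith
  -- v facts
  have hvv : v ⬝ᵥ v = 1 := by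
    simpa [dotProduct, sq] using hv_unit
  have htrvv : (vecMulVec v v).trace = 1 := by
    have : (vecMulVec v v).trace = v ⬝ᵥ v := by
      simp [Matrix.trace, Matrix.diag, vecMulVec_apply, dotProduct]
    rw [this, hvv]
  have htrMvv : (M * vecMulVec v v).trace = lam := by
    have h1 : (M * vecMulVec v v).trace = v ⬝ᵥ M.mulVec v := by
      simp only [Matrix.trace, Matrix.diag, Matrix.mul_apply, vecMulVec_apply, dotProduct,
        mulVec]
      refine Finset.sum_congr rfl fun i _ => ?_
      rw [Finset.mul_sum]
      refine Finset.sum_congr rfl fun j _ => by ring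
    rw [h1, hv, dotProduct_smul, smul_eq_mul, hvv, mul_one]
  have hvvpsd : (vecMulVec v v).PosSemidef := by
    refine Matrix.PosSemidef.of_dotProduct_mulVec_nonneg ?_ ?_
    · rw [Matrix.IsHermitian]
      ext i j
      simp [vecMulVec_apply, mul_comm]
    · intro x
      rw [star_trivial]
      have hmv : (vecMulVec v v).mulVec x = (v ⬝ᵥ x) • v := by
        funext i
        simp only [mulVec, vecMulVec_apply, dotProduct, Pi.smul_apply, smul_eq_mul]
        rw [Finset.sum_mul]
        exact Finset.sum_congr rfl fun j _ => by ring
      rw [hmv, dotProduct_smul, smul_eq_mul, dotProduct_comm]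
      exact mul_self_nonneg _
  have hc0 : 0 ≤ ρ - g ⬝ᵥ g := by linarith
  have hSpsd : ((ρ - g ⬝ᵥ g) • vecMulVec v v).PosSemidef := by
    refine Matrix.PosSemidef.of_dotProduct_mulVec_nonneg ?_ ?_
    · rw [Matrix.IsHermitian, conjTranspose_smul, star_trivial, hvvpsd.1.eq]
    · intro x
      rw [smul_mulVec, dotProduct_smul, smul_eq_mul]
      exact mul_nonneg hc0 (by simpa using hvvpsd.dotProduct_mulVec_nonneg x)
  -- trace identities at the optimum
  have htrS : ((ρ - g ⬝ᵥ g) • vecMulVec v v).trace = ρ - g ⬝ᵥ g := by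
    rw [trace_smul, smul_eq_mul, htrvv, mul_one]
  have htrMS : (M * ((ρ - g ⬝ᵥ g) • vecMulVec v v)).trace = (ρ - g ⬝ᵥ g) * lam := by
    rw [Matrix.mul_smul, trace_smul, smul_eq_mul, htrMvv]
  -- key scalar identity
  have hbg : b ⬝ᵥ g = g ⬝ᵥ R.mulVec g + lam * (g ⬝ᵥ g) := by
    have h1 := hAexp g
    have h2 : g ⬝ᵥ A.mulVec g = b ⬝ᵥ g := by rw [hdotA, hAg]
    rw [h2] at h1
    exact h1
  -- value at the optimum
  have hval : 2 * (b ⬝ᵥ g) - g ⬝ᵥ R.mulVec g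
      + (M * ((ρ - g ⬝ᵥ g) • vecMulVec v v)).trace = b ⬝ᵥ g + lam * ρ := by
    rw [htrMS]
    linarith [hbg]
  have hactive : g ⬝ᵥ g + ((ρ - g ⬝ᵥ g) • vecMulVec v v).trace = ρ := by
    rw [htrS]; ring
  refine ⟨⟨⟨g, (ρ - g ⬝ᵥ g) • vecMulVec v v, hSpsd, le_of_eq hactive, hval.symm⟩, ?_⟩,
    hSpsd, hval, hactive⟩
  rintro x ⟨Γ, S, hS, hcon, rfl⟩
  have h1 : (M * S).trace ≤ lam * S.trace := hMtr S hS
  have h2 : lam * S.trace ≤ lam * (ρ - Γ ⬝ᵥ Γ) := by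
    apply mul_le_mul_of_nonneg_left _ hlam_pos.le
    linarith
  have h3 := hquad Γ
  rw [hAexp Γ] at h3
  linarith
end
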